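/- Given Δt > 0, if the variance recursions σ²_{k+i+1} = σ²_{k+i} + Δt²σ'²_{k+i} and σ'²_{k+i+1} = (2/Δt²)σ²_{k+i} + σ'²_{k+i} hold with nonnegative initial values σ²_k, σ'²_k not both zero, then both sequences (σ²_{k+i})_i and (σ'²_{k+i})_i are nondecreasing and σ²_{k+i} → ∞ as i → ∞. -/
import Mathlib


open Filter

/-- Under the variance propagation recursions
`σ²_{i+1} = σ²_i + Δt² σ'²_i` and `σ'²_{i+1} = (2/Δt²) σ²_i + σ'²_i`, with nonnegative
initial values not both zero, both sequences are nondecreasing and `σ²_i → ∞`. -/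
theorem stmt_18 (Δt : ℝ) (hΔt : 0 < Δt) (s s' : ℕ → ℝ)
    (hs0 : 0 ≤ s 0) (hs'0 : 0 ≤ s' 0) (hpos : 0 < s 0 + s' 0)
    (hs : ∀ i, s (i + 1) = s i + Δt ^ 2 * s' i)
    (hs' : ∀ i, s' (i + 1) = (2 / Δt ^ 2) * s i + s' i) :
    Monotone s ∧ Monotone s' ∧ Tendsto s atTop atTop := by
  have hΔ2 : (0:ℝ) < Δt ^ 2 := by positivity
  have hnn : ∀ i, 0 ≤ s i ∧ 0 ≤ s' i := by
    intro i
    induction i with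
    | zero => exact ⟨hs0, hs'0⟩
    | succ n ih =>
      refine ⟨?_, ?_⟩
      · rw [hs n]; nlinarith [ih.1, ih.2]
      · rw [hs' n]; have : 0 ≤ 2 / Δt ^ 2 := by positivity
        nlinarith [ih.1, ih.2]
  have hmono : Monotone s := by
    apply monotone_nat_of_le_succ
    intro n; rw [hs n]; nlinarith [(hnn n).2]
  have hmono' : Monotone s' := by
    apply monotone_nat_of_le_succ
    intro n; rw [hs' n]
    have : 0 ≤ 2 / Δt ^ 2 := by positivity
    nlinarith [(hnn n).1]
  refine ⟨hmono, hmono', ?_⟩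
  -- s 1 > 0
  have hs1 : 0 < s 1 := by
    rw [hs 0]
    rcases lt_or_ge 0 (s' 0) with h | h
    · nlinarith [mul_pos hΔ2 h]
    · have : s' 0 = 0 := le_antisymm h hs'0
      nlinarith
  -- s' 2 > 0
  have hs'2 : 0 < s' 2 := by
    rw [hs' 1]
    have h1 : 0 < 2 / Δt ^ 2 := by positivity
    nlinarith [(hnn 1).2, mul_pos h1 hs1]
  set c := Δt ^ 2 * s' 2 with hc
  have hcpos : 0 < c := by positivity
  have key : ∀ n : ℕ, s 2 + c * n ≤ s (n + 2) := by
    intro n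
    induction n with
    | zero => simp
    | succ m ih =>
      have h1 : s' 2 ≤ s' (m + 2) := hmono' (by omega)
      have h2 : s (m + 2 + 1) = s (m + 2) + Δt ^ 2 * s' (m + 2) := hs (m + 2)
      have : s 2 + c * (m + 1) ≤ s (m + 2) + c := by push_cast; nlinarith
      calc s 2 + c * (m + 1 : ℕ) ≤ s (m + 2) + c := by push_cast; nlinarith
      _ ≤ s (m + 1 + 2) := by rw [show m + 1 + 2 = m + 2 + 1 by omega, h2]; nlinarith
  have h1 : Tendsto (fun n : ℕ => s 2 + c * n) atTop atTop := by
    apply tendsto_atTop_add_const_left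
    exact (tendsto_natCast_atTop_atTop.const_mul_atTop hcpos)
  have h2 : Tendsto (fun n : ℕ => s (n + 2)) atTop atTop :=
    tendsto_atTop_mono key h1
  exact (tendsto_add_atTop_iff_nat 2).mp h2
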